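/- A subset Ψ ⊆ Φ, the affine root system of type A_2^{(2)}, is a maximal closed subroot system of Φ if and only if one of the following holds: (1) Ψ = Ψ(k, q) for some integer k ≥ 0 and some odd prime number q; (2) Ψ = {±(ε + (2r + 1/2)δ) : r ∈ ℤ} or Ψ = {±(ε + (2r + 3/2)δ) : r ∈ ℤ}; (3) Ψ = {±(2ε + 2rδ) : r ∈ ℤ}. -/

import Mathlib

noncomputable section

variable {V : Type*} [NormedAddCommGroup V] [InnerProductSpace ℝ V]

/-- The Cartan pairing `⟨β, α∨⟩ = 2(β,α)/(α,α)`. -/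
def cartanPair (α β : V) : ℝ := 2 * (inner ℝ β α : ℝ) / (inner ℝ α α : ℝ)

/-- The reflection `s_α` on `V`: `s_α(β) = β - ⟨β,α∨⟩ α`. -/
def reflV (α β : V) : V := β - cartanPair α β • α

/-- The affine reflection `s_x` on `V × ℝ` with respect to the bilinear form
`B((x,a),(y,b)) = (x,y)`. -/
def reflA (x y : V × ℝ) : V × ℝ :=
  y - (2 * (inner ℝ y.1 x.1 : ℝ) / (inner ℝ x.1 x.1 : ℝ)) • x

/-- A finite irreducible reduced crystallographic root system in `V`. -/
structure IsIrreducibleRootSystem (R : Set V) : Prop where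
  finite : R.Finite
  spans : Submodule.span ℝ R = ⊤
  zero_notMem : (0 : V) ∉ R
  reduced : ∀ α ∈ R, ∀ c : ℝ, c • α ∈ R → c = 1 ∨ c = -1
  cartan_int : ∀ α ∈ R, ∀ β ∈ R, ∃ n : ℤ, cartanPair α β = (n : ℝ)
  refl_mem : ∀ α ∈ R, ∀ β ∈ R, reflV α β ∈ R
  irred : ∀ A B : Set V, R = A ∪ B → A.Nonempty → B.Nonempty →
    ∃ a ∈ A, ∃ b ∈ B, (inner ℝ a b : ℝ) ≠ 0

/-- A subroot system of a set `Φ` of affine roots: a nonempty proper subset stable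
under the reflections `s_x`, `x ∈ Ψ`. -/
def IsSubrootSystem (Φ Ψ : Set (V × ℝ)) : Prop :=
  Ψ.Nonempty ∧ Ψ ⊆ Φ ∧ Ψ ≠ Φ ∧ ∀ x ∈ Ψ, ∀ y ∈ Ψ, reflA x y ∈ Ψ

/-- `Ψ` is closed in `Φ`. -/
def IsClosedIn (Φ Ψ : Set (V × ℝ)) : Prop := ∀ x ∈ Ψ, ∀ y ∈ Ψ, x + y ∈ Φ → x + y ∈ Ψ

def IsClosedSubrootSystem (Φ Ψ : Set (V × ℝ)) : Prop :=
  IsSubrootSystem Φ Ψ ∧ IsClosedIn Φ Ψ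

/-- A maximal closed subroot system of `Φ`: any closed subroot system of `Φ`
containing it equals it. -/
def IsMaximalClosedSubrootSystem (Φ Ψ : Set (V × ℝ)) : Prop :=
  IsClosedSubrootSystem Φ Ψ ∧ ∀ Δ, IsClosedSubrootSystem Φ Δ → Ψ ⊆ Δ → Δ = Ψ

/-- A subroot system of a finite root system `R`. -/
def IsSubrootSystemF (R S : Set V) : Prop :=
  S.Nonempty ∧ S ⊆ R ∧ S ≠ R ∧ ∀ α ∈ S, ∀ β ∈ S, reflV α β ∈ S

/-- `S` is closed in the finite root system `R`. -/
def IsClosedInF (R S : Set V) : Prop := ∀ α ∈ S, ∀ β ∈ S, α + β ∈ R → α + β ∈ S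

def IsMaximalClosedSubrootSystemF (R S : Set V) : Prop :=
  (IsSubrootSystemF R S ∧ IsClosedInF R S) ∧
    ∀ T, IsSubrootSystemF R T → IsClosedInF R T → S ⊆ T → T = S

/-- A `ℤ`-linear function on `S`: the restriction to `S` of an additive group
homomorphism from the subgroup of `V` generated by `S` to `ℤ`. -/
def IsZLinearOn (S : Set V) (p : V → ℤ) : Prop :=
  ∃ f : AddSubgroup.closure S →+ ℤ,
    ∀ α, ∀ h : α ∈ S, p α = f ⟨α, AddSubgroup.subset_closure h⟩

/-- An irreducible subset: nonempty and not a union of two nonempty mutually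
orthogonal subsets. -/
def IsIrreducibleSubset (S : Set V) : Prop :=
  S.Nonempty ∧ ∀ A B : Set V, S = A ∪ B → A.Nonempty → B.Nonempty →
    ∃ a ∈ A, ∃ b ∈ B, (inner ℝ a b : ℝ) ≠ 0

/-- `σ` is a sign. -/
def PM (σ : ℝ) : Prop := σ = 1 ∨ σ = -1

/-- The affine root system of type `A_2^{(2)}`, with `ε = 1 ∈ ℝ`. -/
def PhiA22 : Set (ℝ × ℝ) :=
  {x | (∃ σ : ℝ, PM σ ∧ ∃ r : ℤ, x = (σ, (r : ℝ) + 1 / 2)) ∨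
       (∃ σ : ℝ, PM σ ∧ ∃ r : ℤ, x = (2 * σ, 2 * (r : ℝ)))}

/-- The subset `Ψ(k, q)` attached to `k ≥ 0` and an odd prime `q`. -/
def PsiKQ (k q : ℕ) : Set (ℝ × ℝ) :=
  {x | (∃ σ : ℝ, PM σ ∧ ∃ r : ℤ,
          x = (σ, σ * ((k : ℝ) + 1 / 2 + (r : ℝ) * (q : ℝ)))) ∨
       (∃ σ : ℝ, PM σ ∧ ∃ r : ℤ,
          x = (2 * σ, σ * (2 * (k : ℝ) + 1 + (2 * (r : ℝ) + 1) * (q : ℝ))))}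


set_option linter.unnecessarySeqFocus false
set_option maxHeartbeats 1000000
section A22Aux

def coset (a d : ℤ) : Set ℤ := {x | ∃ k : ℤ, x = a + d * k}

lemma mem_coset_self (a d : ℤ) : a ∈ coset a d := ⟨0, by ring⟩

lemma coset_shift {a b d : ℤ} (h : b ∈ coset a d) : coset b d = coset a d := by
  obtain ⟨k, rfl⟩ := h
  ext x; constructor
  · rintro ⟨j, rfl⟩; exact ⟨k + j, by ring⟩
  · rintro ⟨j, rfl⟩; exact ⟨j - k, by ring⟩

lemma coset_one (a : ℤ) : coset a 1 = Set.univ := by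
  ext x; simp only [Set.mem_univ, iff_true]; exact ⟨x - a, by ring⟩

lemma coset_abs (a d : ℤ) : coset a |d| = coset a d := by
  rcases abs_choice d with h | h
  · rw [h]
  · rw [h]; ext x; constructor
    · rintro ⟨k, rfl⟩; exact ⟨-k, by ring⟩
    · rintro ⟨k, rfl⟩; exact ⟨-k, by ring⟩

lemma coset_subset_elim {a a' d d' : ℤ} (h : coset a d ⊆ coset a' d') :
    d' ∣ d ∧ a ∈ coset a' d' := by
  have h1 : a ∈ coset a' d' := h (mem_coset_self a d)
  have h2 : a + d ∈ coset a' d' := h ⟨1, by ring⟩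
  obtain ⟨k, hk⟩ := h1
  obtain ⟨j, hj⟩ := h2
  exact ⟨⟨j - k, by linarith [hj, hk]⟩, ⟨k, hk⟩⟩

lemma coset_subset_of {a a' d d' : ℤ} (hd : d' ∣ d) (ha : a ∈ coset a' d') :
    coset a d ⊆ coset a' d' := by
  obtain ⟨u, rfl⟩ := hd
  obtain ⟨k, rfl⟩ := ha
  rintro x ⟨j, rfl⟩
  exact ⟨k + u * j, by ring⟩

lemma cosetify {S : Set ℤ} {a : ℤ} (ha : a ∈ S)
    (hS : ∀ m ∈ S, ∀ n ∈ S, 2*m - n ∈ S) :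
    ∃ d : ℤ, 0 ≤ d ∧ S = coset a d := by
  set X : Set ℤ := {x | a + x ∈ S} with hXdef
  have hX0 : (0:ℤ) ∈ X := by simpa [hXdef] using ha
  have hXop : ∀ x ∈ X, ∀ y ∈ X, 2*x - y ∈ X := by
    intro x hx y hy
    have h := hS _ hx _ hy
    have e : 2*(a+x) - (a+y) = a + (2*x - y) := by ring
    rw [e] at h; exact h
  have hXneg : ∀ x ∈ X, -x ∈ X := fun x hx => by
    simpa using hXop 0 hX0 x hx
  set G := AddSubgroup.closure X with hGdef
  have key : ∀ g ∈ G, ∀ x ∈ X, x + 2*g ∈ X ∧ x - 2*g ∈ X := by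
    intro g hg
    refine AddSubgroup.closure_induction ?_ ?_ ?_ ?_ hg
    · intro u hu x hx
      constructor
      · have h := hXop u hu (-x) (hXneg x hx)
        have e : 2*u - -x = x + 2*u := by ring
        rwa [e] at h
      · have h := hXop (-u) (hXneg u hu) (-x) (hXneg x hx)
        have e : 2*(-u) - -x = x - 2*u := by ring
        rwa [e] at h
    · intro x hx; constructor <;> simpa using hx
    · intro g1 g2 _ _ ih1 ih2 x hx
      constructor
      · have h := (ih2 _ (ih1 x hx).1).1
        have e : x + 2*g1 + 2*g2 = x + 2*(g1+g2) := by ring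
        rwa [e] at h
      · have h := (ih2 _ (ih1 x hx).2).2
        have e : x - 2*g1 - 2*g2 = x - 2*(g1+g2) := by ring
        rwa [e] at h
    · intro g _ ih x hx
      constructor
      · have h := (ih x hx).2
        have e : x - 2*g = x + 2*(-g) := by ring
        rwa [e] at h
      · have h := (ih x hx).1
        have e : x + 2*g = x - 2*(-g) := by ring
        rwa [e] at h
  obtain ⟨g, hG⟩ := Int.subgroup_cyclic G
  have hmemG : ∀ x, x ∈ G ↔ ∃ k : ℤ, x = g * k := by
    intro x
    rw [hG, AddSubgroup.mem_closure_singleton]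
    constructor
    · rintro ⟨n, hn⟩; exact ⟨n, by rw [← hn, smul_eq_mul, mul_comm]⟩
    · rintro ⟨k, hk⟩; exact ⟨k, by rw [hk, smul_eq_mul, mul_comm]⟩
  have hXsubG : X ⊆ (G : Set ℤ) := by rw [hGdef]; exact AddSubgroup.subset_closure
  have hSG : S = coset a g := by
    ext x
    constructor
    · intro hx
      have hxa : x - a ∈ X := by
        have e : a + (x - a) = x := by ring
        show a + (x - a) ∈ S
        rw [e]; exact hx
      obtain ⟨k, hk⟩ := (hmemG _).1 (hXsubG hxa)
      exact ⟨k, by linarith⟩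
    · rintro ⟨k, rfl⟩
      by_cases hg0 : g = 0
      · subst hg0; simpa using ha
      · have hgk : g * k ∈ X := by
          rcases Int.even_or_odd k with ⟨j, hj⟩ | ⟨j, hj⟩
          · have hgj : g * j ∈ G := (hmemG _).2 ⟨j, rfl⟩
            have h := (key _ hgj 0 hX0).1
            have e : (0:ℤ) + 2*(g*j) = g*k := by rw [hj]; ring
            rwa [e] at h
          · by_cases H : ∃ u ∈ X, ∃ i : ℤ, u = g * (2*i+1)
            · obtain ⟨u, hu, i, rfl⟩ := H
              have hdiff : g * (j - i) ∈ G := (hmemG _).2 ⟨j - i, rfl⟩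
              have h := (key _ hdiff _ hu).1
              have e : g*(2*i+1) + 2*(g*(j-i)) = g*k := by rw [hj]; ring
              rwa [e] at h
            · exfalso
              push_neg at H
              have hX2g : X ⊆ (AddSubgroup.zmultiples (2*g) : Set ℤ) := by
                intro u hu
                obtain ⟨k', hk'⟩ := (hmemG _).1 (hXsubG hu)
                rcases Int.even_or_odd k' with ⟨i, hi⟩ | ⟨i, hi⟩
                · exact ⟨i, by show i • (2*g) = u; rw [smul_eq_mul, hk', hi]; ring⟩
                · exact absurd hk' (by simpa [hi] using H u hu i)
              have hGle : G ≤ AddSubgroup.zmultiples (2*g) := by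
                rw [hGdef]
                exact (AddSubgroup.closure_le _).2 hX2g
              have hgG : g ∈ G := by
                rw [hG]; exact AddSubgroup.mem_closure_singleton.2 ⟨1, one_smul _ _⟩
              obtain ⟨i, hi⟩ := hGle hgG
              have hi' : i * (2*g) = g := by simpa using hi
              have h0 : g * (1 - 2*i) = 0 := by linarith [hi']
              rcases mul_eq_zero.1 h0 with h | h
              · exact hg0 h
              · omega
        exact hgk
  refine ⟨|g|, abs_nonneg g, ?_⟩
  rw [hSG, coset_abs]

structure GoodPair (S L : Set ℤ) : Prop where
  h1 : ∀ m ∈ S, ∀ n ∈ S, 2*m - n ∈ S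
  h4 : ∀ r ∈ L, ∀ r' ∈ L, 2*r - r' ∈ L
  h2 : ∀ m ∈ S, ∀ r ∈ L, 2*m + 1 - r ∈ L
  h3 : ∀ r ∈ L, ∀ m ∈ S, 2*r - m - 1 ∈ S
  hc1 : ∀ m ∈ S, ∀ n ∈ S, ∀ r : ℤ, m + n + 1 = 2*r → r ∈ L

lemma classify_S_empty {S L : Set ℤ} (hG : GoodPair S L) (hL : L.Nonempty) :
    ∃ b e : ℤ, 0 ≤ e ∧ L = coset b e := by
  obtain ⟨b, hb⟩ := hL
  obtain ⟨e, he, hLe⟩ := cosetify hb hG.h4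
  exact ⟨b, e, he, hLe⟩

lemma classify_L_empty {S L : Set ℤ} (hG : GoodPair S L) (hL : L = ∅) (hS : S.Nonempty) :
    ∃ a d : ℤ, 0 ≤ d ∧ 2 ∣ d ∧ S = coset a d := by
  obtain ⟨a, ha⟩ := hS
  obtain ⟨d, hd, hSd⟩ := cosetify ha hG.h1
  refine ⟨a, d, hd, ?_, hSd⟩
  by_contra hodd
  obtain ⟨j, hj⟩ : ∃ j, d = 2*j + 1 := by
    rcases Int.even_or_odd d with ⟨c, hc⟩ | ⟨c, hc⟩
    · exact absurd ⟨c, by omega⟩ hodd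
    · exact ⟨c, by omega⟩
  have hn : a + d * 1 ∈ S := by rw [hSd]; exact ⟨1, rfl⟩
  have := hG.hc1 a ha _ hn (a + j + 1) (by rw [hj]; ring)
  rw [hL] at this
  exact this

lemma classify_both {S L : Set ℤ} (hG : GoodPair S L) (hS : S.Nonempty) (hL : L.Nonempty) :
    ∃ a d e : ℤ, 1 ≤ d ∧ 2*e = d + 1 ∧ S = coset a d ∧ L = coset (a+e) d := by
  obtain ⟨a, ha⟩ := hS
  obtain ⟨d, hd0, hSd⟩ := cosetify ha hG.h1
  obtain ⟨r0, hr0⟩ := hL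
  -- d is odd
  have hdodd : ¬ (2 ∣ d) := by
    intro ⟨c, hc⟩
    have h3 := hG.h3 r0 hr0 a ha
    rw [hSd] at h3
    obtain ⟨k, hk⟩ := h3
    -- 2*r0 - a - 1 = a + d*k, d = 2c
    have hdk : d * k = 2*(c*k) := by rw [hc]; ring
    set t := c*k with ht
    omega
  obtain ⟨j, hj⟩ : ∃ j, d = 2*j + 1 := by
    rcases Int.even_or_odd d with ⟨c, hc⟩ | ⟨c, hc⟩
    · exact absurd ⟨c, by omega⟩ hdodd
    · exact ⟨c, by omega⟩
  refine ⟨a, d, j+1, by omega, by omega, hSd, ?_⟩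
  ext r
  constructor
  · intro hr
    have h3 := hG.h3 r hr a ha
    rw [hSd] at h3
    obtain ⟨k, hk⟩ := h3
    rcases Int.even_or_odd k with ⟨u, hu⟩ | ⟨u, hu⟩
    · exfalso
      have hdk : d * k = 2*(d*u) := by rw [hu]; ring
      set t := d*u with ht
      omega
    · refine ⟨u, ?_⟩
      have hdk : d * k = 2*(d*u) + d := by rw [hu]; ring
      have he : d * u = d * u := rfl
      set t := d*u with ht
      omega
  · rintro ⟨k, hk⟩
    have hn : a + d * (2*k+1) ∈ S := by rw [hSd]; exact ⟨2*k+1, rfl⟩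
    refine hG.hc1 a ha _ hn r ?_
    have : d * (2*k+1) = 2*(d*k) + d := by ring
    set t := d*k with ht
    omega

lemma good_cand1 (a e d : ℤ) (he : 2*e = d+1) : GoodPair (coset a d) (coset (a+e) d) := by
  constructor
  · rintro m ⟨k, rfl⟩ n ⟨l, rfl⟩; exact ⟨2*k - l, by ring⟩
  · rintro r ⟨k, rfl⟩ r' ⟨l, rfl⟩; exact ⟨2*k - l, by ring⟩
  · rintro m ⟨k, rfl⟩ r ⟨l, rfl⟩; exact ⟨2*k - l - 1, by linear_combination -he⟩
  · rintro r ⟨k, rfl⟩ m ⟨l, rfl⟩; exact ⟨2*k - l + 1, by linear_combination he⟩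
  · rintro m ⟨k, rfl⟩ n ⟨l, rfl⟩ r hr
    rcases Int.even_or_odd (k+l) with ⟨u, hu⟩ | ⟨u, hu⟩
    · exfalso
      have h1 : d*k + d*l = 2*(d*u) := by rw [show k = u + u - l by omega]; ring
      set t := d*u with ht
      omega
    · refine ⟨u, ?_⟩
      have h1 : d*k + d*l = 2*(d*u) + d := by rw [show k = 2*u+1-l by omega]; ring
      set t := d*u with ht
      omega

lemma good_cand2 (a : ℤ) : GoodPair (coset a 2) ∅ := by
  constructor
  · rintro m ⟨k, rfl⟩ n ⟨l, rfl⟩; exact ⟨2*k - l, by ring⟩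
  · rintro r hr; simp at hr
  · rintro m _ r hr; simp at hr
  · rintro r hr; simp at hr
  · rintro m ⟨k, rfl⟩ n ⟨l, rfl⟩ r hr; omega

lemma good_cand3 : GoodPair ∅ (coset 0 1) := by
  constructor
  · rintro m hm; simp at hm
  · rintro r ⟨k, rfl⟩ r' ⟨l, rfl⟩; exact ⟨2*k - l, by ring⟩
  · rintro m hm; simp at hm
  · rintro r _ m hm; simp at hm
  · rintro m hm; simp at hm

def encode (S L : Set ℤ) : Set (ℝ × ℝ) :=
  {x | (∃ m ∈ S, x = ((1:ℝ), (m:ℝ) + 1/2)) ∨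
       (∃ m ∈ S, x = ((-1:ℝ), -(m:ℝ) - 1/2)) ∨
       (∃ r ∈ L, x = ((2:ℝ), 2*(r:ℝ))) ∨
       (∃ r ∈ L, x = ((-2:ℝ), -(2*(r:ℝ))))}


lemma reflA_eval (a c b d : ℝ) (ha : a ≠ 0) :
    reflA (a, c) (b, d) = (-b, d - (2*b/a)*c) := by
  unfold reflA
  have h1 : (inner ℝ (b:ℝ) (a:ℝ) : ℝ) = b * a := by
    rw [RCLike.inner_apply, conj_trivial]; ring
  have h2 : (inner ℝ (a:ℝ) (a:ℝ) : ℝ) = a * a := by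
    rw [RCLike.inner_apply, conj_trivial]
  simp only [h1, h2, Prod.smul_mk, Prod.mk_sub_mk, smul_eq_mul]
  rw [Prod.mk.injEq]
  constructor
  · field_simp; ring
  · field_simp

-- intro lemmas
lemma enc1 {S L : Set ℤ} {m : ℤ} (h : m ∈ S) : ((1:ℝ), (m:ℝ) + 1/2) ∈ encode S L :=
  Or.inl ⟨m, h, rfl⟩
lemma enc2 {S L : Set ℤ} {m : ℤ} (h : m ∈ S) : ((-1:ℝ), -(m:ℝ) - 1/2) ∈ encode S L :=
  Or.inr (Or.inl ⟨m, h, rfl⟩)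
lemma enc3 {S L : Set ℤ} {r : ℤ} (h : r ∈ L) : ((2:ℝ), 2*(r:ℝ)) ∈ encode S L :=
  Or.inr (Or.inr (Or.inl ⟨r, h, rfl⟩))
lemma enc4 {S L : Set ℤ} {r : ℤ} (h : r ∈ L) : ((-2:ℝ), -(2*(r:ℝ))) ∈ encode S L :=
  Or.inr (Or.inr (Or.inr ⟨r, h, rfl⟩))

-- decode lemmas
lemma dec1 {S L : Set ℤ} {m : ℤ} (h : ((1:ℝ), (m:ℝ) + 1/2) ∈ encode S L) : m ∈ S := by
  rcases h with ⟨m', hm', h⟩ | ⟨m', hm', h⟩ | ⟨r', hr', h⟩ | ⟨r', hr', h⟩ <;>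
    rw [Prod.mk.injEq] at h
  · have : (m:ℝ) = m' := by have := h.2; linarith
    have : m = m' := by exact_mod_cast this
    rwa [this]
  · exact absurd h.1 (by norm_num)
  · exact absurd h.1 (by norm_num)
  · exact absurd h.1 (by norm_num)
lemma dec2 {S L : Set ℤ} {m : ℤ} (h : ((-1:ℝ), -(m:ℝ) - 1/2) ∈ encode S L) : m ∈ S := by
  rcases h with ⟨m', hm', h⟩ | ⟨m', hm', h⟩ | ⟨r', hr', h⟩ | ⟨r', hr', h⟩ <;>
    rw [Prod.mk.injEq] at h
  · exact absurd h.1 (by norm_num)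
  · have : (m:ℝ) = m' := by have := h.2; linarith
    have : m = m' := by exact_mod_cast this
    rwa [this]
  · exact absurd h.1 (by norm_num)
  · exact absurd h.1 (by norm_num)
lemma dec3 {S L : Set ℤ} {r : ℤ} (h : ((2:ℝ), 2*(r:ℝ)) ∈ encode S L) : r ∈ L := by
  rcases h with ⟨m', hm', h⟩ | ⟨m', hm', h⟩ | ⟨r', hr', h⟩ | ⟨r', hr', h⟩ <;>
    rw [Prod.mk.injEq] at h
  · exact absurd h.1 (by norm_num)
  · exact absurd h.1 (by norm_num)
  · have : (r:ℝ) = r' := by have := h.2; linarith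
    have : r = r' := by exact_mod_cast this
    rwa [this]
  · exact absurd h.1 (by norm_num)
lemma dec4 {S L : Set ℤ} {r : ℤ} (h : ((-2:ℝ), -(2*(r:ℝ))) ∈ encode S L) : r ∈ L := by
  rcases h with ⟨m', hm', h⟩ | ⟨m', hm', h⟩ | ⟨r', hr', h⟩ | ⟨r', hr', h⟩ <;>
    rw [Prod.mk.injEq] at h
  · exact absurd h.1 (by norm_num)
  · exact absurd h.1 (by norm_num)
  · exact absurd h.1 (by norm_num)
  · have : (r:ℝ) = r' := by have := h.2; linarith
    have : r = r' := by exact_mod_cast this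
    rwa [this]

-- Phi membership
lemma phi1 (m : ℤ) : ((1:ℝ), (m:ℝ) + 1/2) ∈ PhiA22 :=
  Or.inl ⟨1, Or.inl rfl, m, rfl⟩
lemma phi2 (m : ℤ) : ((-1:ℝ), -(m:ℝ) - 1/2) ∈ PhiA22 :=
  Or.inl ⟨-1, Or.inr rfl, -m-1, by push_cast; rw [Prod.mk.injEq]; constructor <;> ring⟩
lemma phi3 (r : ℤ) : ((2:ℝ), 2*(r:ℝ)) ∈ PhiA22 :=
  Or.inr ⟨1, Or.inl rfl, r, by norm_num⟩
lemma phi4 (r : ℤ) : ((-2:ℝ), -(2*(r:ℝ))) ∈ PhiA22 :=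
  Or.inr ⟨-1, Or.inr rfl, -r, by push_cast; rw [Prod.mk.injEq]; constructor <;> ring⟩

lemma encode_subset_phi (S L : Set ℤ) : encode S L ⊆ PhiA22 := by
  rintro x (⟨m, _, rfl⟩ | ⟨m, _, rfl⟩ | ⟨r, _, rfl⟩ | ⟨r, _, rfl⟩)
  exacts [phi1 m, phi2 m, phi3 r, phi4 r]

lemma phi_elim {x : ℝ × ℝ} (h : x ∈ PhiA22) :
    (∃ m : ℤ, x = ((1:ℝ), (m:ℝ) + 1/2)) ∨ (∃ m : ℤ, x = ((-1:ℝ), -(m:ℝ) - 1/2)) ∨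
    (∃ r : ℤ, x = ((2:ℝ), 2*(r:ℝ))) ∨ (∃ r : ℤ, x = ((-2:ℝ), -(2*(r:ℝ)))) := by
  rcases h with ⟨σ, hσ, r, rfl⟩ | ⟨σ, hσ, r, rfl⟩
  · rcases hσ with rfl | rfl
    · exact Or.inl ⟨r, rfl⟩
    · exact Or.inr (Or.inl ⟨-r-1, by push_cast; rw [Prod.mk.injEq]; constructor <;> ring⟩)
  · rcases hσ with rfl | rfl
    · exact Or.inr (Or.inr (Or.inl ⟨r, by norm_num⟩))
    · exact Or.inr (Or.inr (Or.inr ⟨-r, by push_cast; rw [Prod.mk.injEq]; constructor <;> ring⟩))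

lemma phi_eq_encode_univ : PhiA22 = encode Set.univ Set.univ := by
  ext x
  constructor
  · intro h
    rcases phi_elim h with ⟨m, rfl⟩ | ⟨m, rfl⟩ | ⟨r, rfl⟩ | ⟨r, rfl⟩
    exacts [enc1 trivial, enc2 trivial, enc3 trivial, enc4 trivial]
  · exact fun h => encode_subset_phi _ _ h

lemma encode_mono {S S' L L' : Set ℤ} (hS : S ⊆ S') (hL : L ⊆ L') :
    encode S L ⊆ encode S' L' := by
  rintro x (⟨m, hm, rfl⟩ | ⟨m, hm, rfl⟩ | ⟨r, hr, rfl⟩ | ⟨r, hr, rfl⟩)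
  exacts [enc1 (hS hm), enc2 (hS hm), enc3 (hL hr), enc4 (hL hr)]

lemma encode_eq_phi {S L : Set ℤ} (h : encode S L = PhiA22) :
    S = Set.univ ∧ L = Set.univ := by
  constructor
  · ext m; simp only [Set.mem_univ, iff_true]
    exact dec1 (by rw [h]; exact phi1 m)
  · ext r; simp only [Set.mem_univ, iff_true]
    exact dec3 (by rw [h]; exact phi3 r)

lemma encode_refl {S L : Set ℤ} (hG : GoodPair S L) :
    ∀ x ∈ encode S L, ∀ y ∈ encode S L, reflA x y ∈ encode S L := by
  rintro x (⟨m, hm, rfl⟩ | ⟨m, hm, rfl⟩ | ⟨r, hr, rfl⟩ | ⟨r, hr, rfl⟩) y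
      (⟨n, hn, rfl⟩ | ⟨n, hn, rfl⟩ | ⟨s, hs, rfl⟩ | ⟨s, hs, rfl⟩) <;>
    rw [reflA_eval _ _ _ _ (by norm_num)]
  · convert enc2 (hG.h1 m hm n hn) using 2 <;> push_cast <;> ring
  · convert enc1 (hG.h1 m hm n hn) using 2 <;> push_cast <;> ring
  · convert enc4 (hG.h2 m hm s hs) using 2 <;> push_cast <;> ring
  · convert enc3 (hG.h2 m hm s hs) using 2 <;> push_cast <;> ring
  · convert enc2 (hG.h1 m hm n hn) using 2 <;> push_cast <;> ring
  · convert enc1 (hG.h1 m hm n hn) using 2 <;> push_cast <;> ring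
  · convert enc4 (hG.h2 m hm s hs) using 2 <;> push_cast <;> ring
  · convert enc3 (hG.h2 m hm s hs) using 2 <;> push_cast <;> ring
  · convert enc2 (hG.h3 r hr n hn) using 2 <;> push_cast <;> ring
  · convert enc1 (hG.h3 r hr n hn) using 2 <;> push_cast <;> ring
  · convert enc4 (hG.h4 r hr s hs) using 2 <;> push_cast <;> ring
  · convert enc3 (hG.h4 r hr s hs) using 2 <;> push_cast <;> ring
  · convert enc2 (hG.h3 r hr n hn) using 2 <;> push_cast <;> ring
  · convert enc1 (hG.h3 r hr n hn) using 2 <;> push_cast <;> ring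
  · convert enc4 (hG.h4 r hr s hs) using 2 <;> push_cast <;> ring
  · convert enc3 (hG.h4 r hr s hs) using 2 <;> push_cast <;> ring

lemma encode_closedIn {S L : Set ℤ} (hG : GoodPair S L) :
    ∀ x ∈ encode S L, ∀ y ∈ encode S L, x + y ∈ PhiA22 → x + y ∈ encode S L := by
  rintro x (⟨m, hm, rfl⟩ | ⟨m, hm, rfl⟩ | ⟨r, hr, rfl⟩ | ⟨r, hr, rfl⟩) y
      (⟨n, hn, rfl⟩ | ⟨n, hn, rfl⟩ | ⟨s, hs, rfl⟩ | ⟨s, hs, rfl⟩) hsum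
  · -- (1,m)+(1,n) = (2, m+n+1)
    rcases phi_elim hsum with ⟨t, h⟩ | ⟨t, h⟩ | ⟨t, h⟩ | ⟨t, h⟩ <;>
      (have hc := h; rw [Prod.mk_add_mk, Prod.mk.injEq] at hc)
    · exact absurd hc.1 (by norm_num)
    · exact absurd hc.1 (by norm_num)
    · have hz : m + n + 1 = 2*t := by
        have := hc.2; push_cast at this
        exact_mod_cast (show ((m+n+1:ℤ):ℝ) = ((2*t:ℤ):ℝ) by push_cast; linarith)
      rw [h]; exact enc3 (hG.hc1 m hm n hn t hz)
    · exact absurd hc.1 (by norm_num)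
  · exfalso
    rcases phi_elim hsum with ⟨t, h⟩ | ⟨t, h⟩ | ⟨t, h⟩ | ⟨t, h⟩ <;>
      (rw [Prod.mk_add_mk, Prod.mk.injEq] at h; exact absurd h.1 (by norm_num))
  · exfalso
    rcases phi_elim hsum with ⟨t, h⟩ | ⟨t, h⟩ | ⟨t, h⟩ | ⟨t, h⟩ <;>
      (rw [Prod.mk_add_mk, Prod.mk.injEq] at h; exact absurd h.1 (by norm_num))
  · rw [Prod.mk_add_mk]
    convert enc2 (hG.h3 s hs m hm) using 2 <;> push_cast <;> ring
  · exfalso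
    rcases phi_elim hsum with ⟨t, h⟩ | ⟨t, h⟩ | ⟨t, h⟩ | ⟨t, h⟩ <;>
      (rw [Prod.mk_add_mk, Prod.mk.injEq] at h; exact absurd h.1 (by norm_num))
  · -- (-1,-m)+(-1,-n) = (-2, -(m+n+1))
    rcases phi_elim hsum with ⟨t, h⟩ | ⟨t, h⟩ | ⟨t, h⟩ | ⟨t, h⟩ <;>
      (have hc := h; rw [Prod.mk_add_mk, Prod.mk.injEq] at hc)
    · exact absurd hc.1 (by norm_num)
    · exact absurd hc.1 (by norm_num)
    · exact absurd hc.1 (by norm_num)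
    · have hz : m + n + 1 = 2*t := by
        have := hc.2; push_cast at this
        exact_mod_cast (show ((m+n+1:ℤ):ℝ) = ((2*t:ℤ):ℝ) by push_cast; linarith)
      rw [h]; exact enc4 (hG.hc1 m hm n hn t hz)
  · rw [Prod.mk_add_mk]
    convert enc1 (hG.h3 s hs m hm) using 2 <;> push_cast <;> ring
  · exfalso
    rcases phi_elim hsum with ⟨t, h⟩ | ⟨t, h⟩ | ⟨t, h⟩ | ⟨t, h⟩ <;>
      (rw [Prod.mk_add_mk, Prod.mk.injEq] at h; exact absurd h.1 (by norm_num))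
  · exfalso
    rcases phi_elim hsum with ⟨t, h⟩ | ⟨t, h⟩ | ⟨t, h⟩ | ⟨t, h⟩ <;>
      (rw [Prod.mk_add_mk, Prod.mk.injEq] at h; exact absurd h.1 (by norm_num))
  · rw [Prod.mk_add_mk]
    convert enc1 (hG.h3 r hr n hn) using 2 <;> push_cast <;> ring
  · exfalso
    rcases phi_elim hsum with ⟨t, h⟩ | ⟨t, h⟩ | ⟨t, h⟩ | ⟨t, h⟩ <;>
      (rw [Prod.mk_add_mk, Prod.mk.injEq] at h; exact absurd h.1 (by norm_num))
  · exfalso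
    rcases phi_elim hsum with ⟨t, h⟩ | ⟨t, h⟩ | ⟨t, h⟩ | ⟨t, h⟩ <;>
      (rw [Prod.mk_add_mk, Prod.mk.injEq] at h; exact absurd h.1 (by norm_num))
  · rw [Prod.mk_add_mk]
    convert enc2 (hG.h3 r hr n hn) using 2 <;> push_cast <;> ring
  · exfalso
    rcases phi_elim hsum with ⟨t, h⟩ | ⟨t, h⟩ | ⟨t, h⟩ | ⟨t, h⟩ <;>
      (rw [Prod.mk_add_mk, Prod.mk.injEq] at h; exact absurd h.1 (by norm_num))
  · exfalso
    rcases phi_elim hsum with ⟨t, h⟩ | ⟨t, h⟩ | ⟨t, h⟩ | ⟨t, h⟩ <;>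
      (rw [Prod.mk_add_mk, Prod.mk.injEq] at h; exact absurd h.1 (by norm_num))
  · exfalso
    rcases phi_elim hsum with ⟨t, h⟩ | ⟨t, h⟩ | ⟨t, h⟩ | ⟨t, h⟩ <;>
      (rw [Prod.mk_add_mk, Prod.mk.injEq] at h; exact absurd h.1 (by norm_num))

lemma phi_fst_ne_zero {x : ℝ × ℝ} (h : x ∈ PhiA22) : x.1 ≠ 0 := by
  rcases phi_elim h with ⟨m, rfl⟩ | ⟨m, rfl⟩ | ⟨r, rfl⟩ | ⟨r, rfl⟩ <;> norm_num

lemma reflA_self {x : ℝ × ℝ} (h : x.1 ≠ 0) : reflA x x = -x := by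
  obtain ⟨a, c⟩ := x
  rw [reflA_eval a c a c h, Prod.neg_mk, Prod.mk.injEq]
  constructor
  · rfl
  · field_simp; ring

lemma neg_mem {Ψ : Set (ℝ × ℝ)} (hsub : Ψ ⊆ PhiA22)
    (hrefl : ∀ x ∈ Ψ, ∀ y ∈ Ψ, reflA x y ∈ Ψ) {x : ℝ × ℝ} (hx : x ∈ Ψ) : -x ∈ Ψ := by
  have := hrefl x hx x hx
  rwa [reflA_self (phi_fst_ne_zero (hsub hx))] at this

def Sof (Ψ : Set (ℝ × ℝ)) : Set ℤ := {m | ((1:ℝ), (m:ℝ) + 1/2) ∈ Ψ}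
def Lof (Ψ : Set (ℝ × ℝ)) : Set ℤ := {r | ((2:ℝ), 2*(r:ℝ)) ∈ Ψ}

lemma decompose {Ψ : Set (ℝ × ℝ)} (hsub : Ψ ⊆ PhiA22)
    (hrefl : ∀ x ∈ Ψ, ∀ y ∈ Ψ, reflA x y ∈ Ψ) :
    Ψ = encode (Sof Ψ) (Lof Ψ) := by
  ext x
  constructor
  · intro hx
    rcases phi_elim (hsub hx) with ⟨m, rfl⟩ | ⟨m, rfl⟩ | ⟨r, rfl⟩ | ⟨r, rfl⟩
    · exact enc1 hx
    · refine enc2 (show ((1:ℝ), (m:ℝ)+1/2) ∈ Ψ from ?_)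
      have := neg_mem hsub hrefl hx
      rw [Prod.neg_mk] at this
      convert this using 2 <;> push_cast <;> ring
    · exact enc3 hx
    · refine enc4 (show ((2:ℝ), 2*(r:ℝ)) ∈ Ψ from ?_)
      have := neg_mem hsub hrefl hx
      rw [Prod.neg_mk] at this
      convert this using 2 <;> push_cast <;> ring
  · rintro (⟨m, hm, rfl⟩ | ⟨m, hm, rfl⟩ | ⟨r, hr, rfl⟩ | ⟨r, hr, rfl⟩)
    · exact hm
    · have := neg_mem hsub hrefl hm
      rw [Prod.neg_mk] at this
      convert this using 2 <;> push_cast <;> ring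
    · exact hr
    · have := neg_mem hsub hrefl hr
      rw [Prod.neg_mk] at this
      convert this using 2 <;> push_cast <;> ring

lemma good_of {S L : Set ℤ}
    (hrefl : ∀ x ∈ encode S L, ∀ y ∈ encode S L, reflA x y ∈ encode S L)
    (hclosed : ∀ x ∈ encode S L, ∀ y ∈ encode S L, x + y ∈ PhiA22 → x + y ∈ encode S L) :
    GoodPair S L := by
  constructor
  · intro m hm n hn
    have h := hrefl _ (enc1 (L := L) hm) _ (enc1 hn)
    rw [reflA_eval _ _ _ _ (by norm_num : (1:ℝ) ≠ 0)] at h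
    refine dec2 (show ((-1:ℝ), -((2*m-n:ℤ):ℝ) - 1/2) ∈ encode S L from ?_)
    convert h using 2 <;> push_cast <;> ring
  · intro r hr s hs
    have h := hrefl _ (enc3 (S := S) hr) _ (enc3 hs)
    rw [reflA_eval _ _ _ _ (by norm_num : (2:ℝ) ≠ 0)] at h
    refine dec4 (show ((-2:ℝ), -(2*((2*r-s:ℤ):ℝ))) ∈ encode S L from ?_)
    convert h using 2 <;> push_cast <;> ring
  · intro m hm r hr
    have h := hrefl _ (enc1 (L := L) hm) _ (enc3 hr)
    rw [reflA_eval _ _ _ _ (by norm_num : (1:ℝ) ≠ 0)] at h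
    refine dec4 (show ((-2:ℝ), -(2*((2*m+1-r:ℤ):ℝ))) ∈ encode S L from ?_)
    convert h using 2 <;> push_cast <;> ring
  · intro r hr m hm
    have h := hrefl _ (enc3 (S := S) hr) _ (enc1 hm)
    rw [reflA_eval _ _ _ _ (by norm_num : (2:ℝ) ≠ 0)] at h
    refine dec2 (show ((-1:ℝ), -((2*r-m-1:ℤ):ℝ) - 1/2) ∈ encode S L from ?_)
    convert h using 2 <;> push_cast <;> ring
  · intro m hm n hn r hz
    have hsum : ((1:ℝ), (m:ℝ)+1/2) + ((1:ℝ), (n:ℝ)+1/2) = ((2:ℝ), 2*(r:ℝ)) := by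
      rw [Prod.mk_add_mk, Prod.mk.injEq]
      constructor
      · norm_num
      · have : ((m+n+1:ℤ):ℝ) = ((2*r:ℤ):ℝ) := congrArg (fun z : ℤ => (z:ℝ)) hz
        push_cast at this; linarith
    have h := hclosed _ (enc1 (L := L) hm) _ (enc1 hn) (by rw [hsum]; exact phi3 r)
    rw [hsum] at h
    exact dec3 h


lemma psi_eq_encode (k q : ℕ) (e : ℤ) (he : 2*e = (q:ℤ)+1) :
    PsiKQ k q = encode (coset (k:ℤ) (q:ℤ)) (coset ((k:ℤ)+e) (q:ℤ)) := by
  have her : 2*(e:ℝ) = (q:ℝ)+1 := by exact_mod_cast congrArg (fun z : ℤ => (z:ℝ)) he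
  ext x
  constructor
  · rintro (⟨σ, hσ, r, rfl⟩ | ⟨σ, hσ, r, rfl⟩)
    · rcases hσ with rfl | rfl
      · have hm : (k:ℤ) + (q:ℤ)*r ∈ coset (k:ℤ) (q:ℤ) := ⟨r, rfl⟩
        convert enc1 hm using 2 <;> push_cast <;> ring
      · have hm : (k:ℤ) + (q:ℤ)*r ∈ coset (k:ℤ) (q:ℤ) := ⟨r, rfl⟩
        convert enc2 hm using 2 <;> push_cast <;> ring
    · rcases hσ with rfl | rfl
      · have hm : (k:ℤ) + e + (q:ℤ)*r ∈ coset ((k:ℤ)+e) (q:ℤ) := ⟨r, rfl⟩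
        convert enc3 hm using 2
        · push_cast; ring
        · push_cast; linear_combination -her
      · have hm : (k:ℤ) + e + (q:ℤ)*r ∈ coset ((k:ℤ)+e) (q:ℤ) := ⟨r, rfl⟩
        convert enc4 hm using 2
        · push_cast; ring
        · push_cast; linear_combination her
  · rintro (⟨m, ⟨j, rfl⟩, rfl⟩ | ⟨m, ⟨j, rfl⟩, rfl⟩ | ⟨r, ⟨j, rfl⟩, rfl⟩ | ⟨r, ⟨j, rfl⟩, rfl⟩)
    · exact Or.inl ⟨1, Or.inl rfl, j, by push_cast; rw [Prod.mk.injEq]; constructor <;> ring⟩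
    · exact Or.inl ⟨-1, Or.inr rfl, j, by push_cast; rw [Prod.mk.injEq]; constructor <;> ring⟩
    · refine Or.inr ⟨1, Or.inl rfl, j, ?_⟩
      push_cast; rw [Prod.mk.injEq]
      constructor
      · norm_num
      · linear_combination her
    · refine Or.inr ⟨-1, Or.inr rfl, j, ?_⟩
      push_cast; rw [Prod.mk.injEq]
      constructor
      · norm_num
      · linear_combination -her

lemma cand2_eq_encode (a : ℤ) :
    {x : ℝ × ℝ | ∃ σ : ℝ, PM σ ∧ ∃ r : ℤ, x = (σ, σ * (2 * (r : ℝ) + (2*(a:ℝ)+1) / 2))} =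
      encode (coset a 2) ∅ := by
  ext x
  constructor
  · rintro ⟨σ, hσ, r, rfl⟩
    rcases hσ with rfl | rfl
    · have hm : a + 2*r ∈ coset a 2 := ⟨r, rfl⟩
      convert enc1 hm using 2 <;> push_cast <;> ring
    · have hm : a + 2*r ∈ coset a 2 := ⟨r, rfl⟩
      convert enc2 hm using 2 <;> push_cast <;> ring
  · rintro (⟨m, ⟨j, rfl⟩, rfl⟩ | ⟨m, ⟨j, rfl⟩, rfl⟩ | ⟨r, hr, rfl⟩ | ⟨r, hr, rfl⟩)
    · exact ⟨1, Or.inl rfl, j, by push_cast; rw [Prod.mk.injEq]; constructor <;> ring⟩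
    · exact ⟨-1, Or.inr rfl, j, by push_cast; rw [Prod.mk.injEq]; constructor <;> ring⟩
    · simp at hr
    · simp at hr

lemma cand3_eq_encode :
    {x : ℝ × ℝ | ∃ σ : ℝ, PM σ ∧ ∃ r : ℤ, x = (2 * σ, σ * (2 * (r : ℝ)))} =
      encode ∅ (coset 0 1) := by
  ext x
  constructor
  · rintro ⟨σ, hσ, r, rfl⟩
    rcases hσ with rfl | rfl
    · have hr : (0:ℤ) + 1*r ∈ coset 0 1 := ⟨r, rfl⟩
      convert enc3 hr using 2 <;> push_cast <;> ring
    · have hr : (0:ℤ) + 1*r ∈ coset 0 1 := ⟨r, rfl⟩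
      convert enc4 hr using 2 <;> push_cast <;> ring
  · rintro (⟨m, hm, rfl⟩ | ⟨m, hm, rfl⟩ | ⟨r, ⟨j, rfl⟩, rfl⟩ | ⟨r, ⟨j, rfl⟩, rfl⟩)
    · simp at hm
    · simp at hm
    · exact ⟨1, Or.inl rfl, j, by push_cast; rw [Prod.mk.injEq]; constructor <;> ring⟩
    · exact ⟨-1, Or.inr rfl, j, by push_cast; rw [Prod.mk.injEq]; constructor <;> ring⟩

lemma coset_add_const {a b d c : ℤ} (h : b ∈ coset a d) : b + c ∈ coset (a+c) d := by
  obtain ⟨t, rfl⟩ := h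
  exact ⟨t, by ring⟩

lemma coset_ne_univ {a d : ℤ} (hd : 2 ≤ d) : coset a d ≠ Set.univ := by
  intro h
  have hmem : a + 1 ∈ coset a d := h ▸ Set.mem_univ _
  obtain ⟨t, ht⟩ := hmem
  have h1 : d ∣ 1 := ⟨t, by linarith⟩
  have := Int.le_of_dvd one_pos h1
  omega

lemma encode_proper1 {S L : Set ℤ} {a d : ℤ} (hd : 2 ≤ d) (hS : S = coset a d) :
    encode S L ≠ PhiA22 := fun h => coset_ne_univ hd (by rw [← hS]; exact (encode_eq_phi h).1)

lemma encode_proper_L {S L : Set ℤ} (hL : L = ∅) : encode S L ≠ PhiA22 := by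
  intro h
  have h2 := (encode_eq_phi h).2
  rw [hL] at h2
  exact Set.empty_ne_univ h2

lemma encode_proper_S {S L : Set ℤ} (hS : S = ∅) : encode S L ≠ PhiA22 := by
  intro h
  have h2 := (encode_eq_phi h).1
  rw [hS] at h2
  exact Set.empty_ne_univ h2

lemma encode_csrs {S L : Set ℤ} (hG : GoodPair S L) (hne : (encode S L).Nonempty)
    (hprop : encode S L ≠ PhiA22) : IsClosedSubrootSystem PhiA22 (encode S L) :=
  ⟨⟨hne, encode_subset_phi S L, hprop, encode_refl hG⟩, encode_closedIn hG⟩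

lemma cand2a_eq :
    {x : ℝ × ℝ | ∃ σ : ℝ, PM σ ∧ ∃ r : ℤ, x = (σ, σ * (2 * (r : ℝ) + 1 / 2))} =
      encode (coset 0 2) ∅ := by
  ext x
  constructor
  · rintro ⟨σ, hσ, r, rfl⟩
    rcases hσ with rfl | rfl
    · have hm : (0:ℤ) + 2*r ∈ coset 0 2 := ⟨r, rfl⟩
      convert enc1 hm using 2 <;> push_cast <;> ring
    · have hm : (0:ℤ) + 2*r ∈ coset 0 2 := ⟨r, rfl⟩
      convert enc2 hm using 2 <;> push_cast <;> ring
  · rintro (⟨m, ⟨j, rfl⟩, rfl⟩ | ⟨m, ⟨j, rfl⟩, rfl⟩ | ⟨r, hr, rfl⟩ | ⟨r, hr, rfl⟩)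
    · exact ⟨1, Or.inl rfl, j, by push_cast; rw [Prod.mk.injEq]; constructor <;> ring⟩
    · exact ⟨-1, Or.inr rfl, j, by push_cast; rw [Prod.mk.injEq]; constructor <;> ring⟩
    · simp at hr
    · simp at hr

lemma cand2b_eq :
    {x : ℝ × ℝ | ∃ σ : ℝ, PM σ ∧ ∃ r : ℤ, x = (σ, σ * (2 * (r : ℝ) + 3 / 2))} =
      encode (coset 1 2) ∅ := by
  ext x
  constructor
  · rintro ⟨σ, hσ, r, rfl⟩
    rcases hσ with rfl | rfl
    · have hm : (1:ℤ) + 2*r ∈ coset 1 2 := ⟨r, rfl⟩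
      convert enc1 hm using 2 <;> push_cast <;> ring
    · have hm : (1:ℤ) + 2*r ∈ coset 1 2 := ⟨r, rfl⟩
      convert enc2 hm using 2 <;> push_cast <;> ring
  · rintro (⟨m, ⟨j, rfl⟩, rfl⟩ | ⟨m, ⟨j, rfl⟩, rfl⟩ | ⟨r, hr, rfl⟩ | ⟨r, hr, rfl⟩)
    · exact ⟨1, Or.inl rfl, j, by push_cast; rw [Prod.mk.injEq]; constructor <;> ring⟩
    · exact ⟨-1, Or.inr rfl, j, by push_cast; rw [Prod.mk.injEq]; constructor <;> ring⟩
    · simp at hr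
    · simp at hr

/-- Classification of maximal closed subroot systems of the affine
root system of type `A_2^{(2)}`. -/
theorem statement19 (Ψ : Set (ℝ × ℝ)) :
    IsMaximalClosedSubrootSystem PhiA22 Ψ ↔
      (∃ k q : ℕ, q.Prime ∧ Odd q ∧ Ψ = PsiKQ k q) ∨
      (Ψ = {x : ℝ × ℝ | ∃ σ : ℝ, PM σ ∧ ∃ r : ℤ,
              x = (σ, σ * (2 * (r : ℝ) + 1 / 2))} ∨
       Ψ = {x : ℝ × ℝ | ∃ σ : ℝ, PM σ ∧ ∃ r : ℤ,
              x = (σ, σ * (2 * (r : ℝ) + 3 / 2))}) ∨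
      Ψ = {x : ℝ × ℝ | ∃ σ : ℝ, PM σ ∧ ∃ r : ℤ,
              x = (2 * σ, σ * (2 * (r : ℝ)))} := by
  constructor
  · rintro ⟨⟨⟨hne, hsub, hprop, hrefl⟩, hclosed⟩, hmaxi⟩
    have hdec := decompose hsub hrefl
    set S := Sof Ψ with hSdef
    set L := Lof Ψ with hLdef
    have hrefl' : ∀ x ∈ encode S L, ∀ y ∈ encode S L, reflA x y ∈ encode S L := by
      rw [← hdec]; exact hrefl
    have hclosed' : ∀ x ∈ encode S L, ∀ y ∈ encode S L, x + y ∈ PhiA22 → x + y ∈ encode S L := by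
      rw [← hdec]; exact hclosed
    have hG := good_of hrefl' hclosed'
    have hproper : encode S L ≠ PhiA22 := by rw [← hdec]; exact hprop
    by_cases hS : S.Nonempty
    · by_cases hL : L.Nonempty
      · -- both nonempty
        obtain ⟨a, d, e, hd1, he, hSeq, hLeq⟩ := classify_both hG hS hL
        have hd3 : 3 ≤ d := by
          rcases (by omega : d = 1 ∨ 2 ≤ d) with rfl | h2
          · exfalso
            apply hproper
            rw [hSeq, hLeq, coset_one, coset_one, ← phi_eq_encode_univ]
          · omega
        set n := d.toNat with hn
        have hdn : (n:ℤ) = d := Int.toNat_of_nonneg (by omega)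
        have hn3 : 3 ≤ n := by omega
        have hnodd : ¬ 2 ∣ n := by omega
        set q := n.minFac with hq
        have hqp : q.Prime := Nat.minFac_prime (by omega)
        have hqdvd : q ∣ n := Nat.minFac_dvd n
        have hqodd : Odd q := hqp.odd_of_ne_two (by intro h2; rw [h2] at hqdvd; exact hnodd hqdvd)
        obtain ⟨c, hc⟩ := hqodd
        have hqc : (q:ℤ) = 2*(c:ℤ)+1 := by exact_mod_cast hc
        have hq3 : 3 ≤ q := by have := hqp.two_le; omega
        set e2 : ℤ := (c:ℤ) + 1 with he2def
        have he2 : 2*e2 = (q:ℤ)+1 := by omega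
        have hqd : (q:ℤ) ∣ d := by
          have hh : (q:ℤ) ∣ (n:ℤ) := Int.natCast_dvd_natCast.2 hqdvd
          rwa [hdn] at hh
        obtain ⟨u, hu⟩ := hqd
        obtain ⟨v, hv⟩ : ∃ v, u = 2*v + 1 := by
          rcases Int.even_or_odd u with ⟨w, hw⟩ | ⟨w, hw⟩
          · exfalso
            have hdw : d = 2*((q:ℤ)*w) := by rw [hu, hw]; ring
            set t := (q:ℤ)*w with ht
            omega
          · exact ⟨w, by omega⟩
        have hev : e = e2 + (q:ℤ)*v := by
          have h2 : d = 2*((q:ℤ)*v) + (q:ℤ) := by rw [hu, hv]; ring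
          set t := (q:ℤ)*v with ht
          omega
        have hqd' : (q:ℤ) ∣ d := ⟨u, hu⟩
        set Δ := encode (coset a (q:ℤ)) (coset (a+e2) (q:ℤ)) with hΔ
        have hsub1 : S ⊆ coset a (q:ℤ) := by
          rw [hSeq]; exact coset_subset_of hqd' (mem_coset_self a _)
        have hsub2 : L ⊆ coset (a+e2) (q:ℤ) := by
          rw [hLeq]
          exact coset_subset_of hqd' ⟨v, by rw [hev]; ring⟩
        have hΔcsrs : IsClosedSubrootSystem PhiA22 Δ :=
          encode_csrs (good_cand1 a e2 (q:ℤ) he2) ⟨_, enc1 (mem_coset_self a _)⟩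
            (encode_proper1 (by exact_mod_cast (by omega : 2 ≤ q)) rfl)
        have hΨΔ : Ψ ⊆ Δ := by rw [hdec, hΔ]; exact encode_mono hsub1 hsub2
        have hΔΨ := hmaxi Δ hΔcsrs hΨΔ
        refine Or.inl ⟨(a % (q:ℤ)).toNat, q, hqp, ⟨c, hc⟩, ?_⟩
        have hq0 : (0:ℤ) < (q:ℤ) := by exact_mod_cast hqp.pos
        have hmod : (((a % (q:ℤ)).toNat : ℕ) : ℤ) = a % (q:ℤ) :=
          Int.toNat_of_nonneg (Int.emod_nonneg a (by omega))
        have hmem : (((a % (q:ℤ)).toNat : ℕ) : ℤ) ∈ coset a (q:ℤ) := by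
          rw [hmod]
          exact ⟨-(a / (q:ℤ)), by rw [Int.emod_def]; ring⟩
        have e1 : coset (((a % (q:ℤ)).toNat : ℕ) : ℤ) (q:ℤ) = coset a (q:ℤ) := coset_shift hmem
        have e2' : coset ((((a % (q:ℤ)).toNat : ℕ) : ℤ) + e2) (q:ℤ) = coset (a+e2) (q:ℤ) :=
          coset_shift (coset_add_const hmem)
        rw [psi_eq_encode _ _ e2 he2, e1, e2', ← hΔ, hΔΨ]
      · -- L empty
        have hLe : L = ∅ := Set.not_nonempty_iff_eq_empty.1 hL
        obtain ⟨a, d, hd0, hdvd, hSeq⟩ := classify_L_empty hG hLe hS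
        rcases Int.even_or_odd a with ⟨b, hb⟩ | ⟨b, hb⟩
        · set Δ := encode (coset 0 2) (∅ : Set ℤ) with hΔ
          have hΔcsrs : IsClosedSubrootSystem PhiA22 Δ :=
            encode_csrs (good_cand2 0) ⟨_, enc1 (mem_coset_self 0 2)⟩ (encode_proper_L rfl)
          have hΨΔ : Ψ ⊆ Δ := by
            rw [hdec, hΔ, hLe]
            refine encode_mono ?_ (by simp)
            rw [hSeq]
            exact coset_subset_of hdvd ⟨b, by omega⟩
          have hΔΨ := hmaxi Δ hΔcsrs hΨΔ
          refine Or.inr (Or.inl (Or.inl ?_))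
          rw [cand2a_eq, ← hΔ, hΔΨ]
        · set Δ := encode (coset 1 2) (∅ : Set ℤ) with hΔ
          have hΔcsrs : IsClosedSubrootSystem PhiA22 Δ :=
            encode_csrs (good_cand2 1) ⟨_, enc1 (mem_coset_self 1 2)⟩ (encode_proper_L rfl)
          have hΨΔ : Ψ ⊆ Δ := by
            rw [hdec, hΔ, hLe]
            refine encode_mono ?_ (by simp)
            rw [hSeq]
            exact coset_subset_of hdvd ⟨b, by omega⟩
          have hΔΨ := hmaxi Δ hΔcsrs hΨΔ
          refine Or.inr (Or.inl (Or.inr ?_))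
          rw [cand2b_eq, ← hΔ, hΔΨ]
    · -- S empty
      have hSe : S = ∅ := Set.not_nonempty_iff_eq_empty.1 hS
      set Δ := encode (∅ : Set ℤ) (coset 0 1) with hΔ
      have hΔcsrs : IsClosedSubrootSystem PhiA22 Δ :=
        encode_csrs good_cand3 ⟨_, enc3 (mem_coset_self 0 1)⟩ (encode_proper_S rfl)
      have hΨΔ : Ψ ⊆ Δ := by
        rw [hdec, hΔ, hSe]
        refine encode_mono (by simp) ?_
        rw [coset_one]
        exact Set.subset_univ L
      have hΔΨ := hmaxi Δ hΔcsrs hΨΔ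
      refine Or.inr (Or.inr ?_)
      rw [cand3_eq_encode, ← hΔ, hΔΨ]
  · rintro (⟨k, q, hqp, hqodd, rfl⟩ | ⟨rfl | rfl⟩ | rfl)
    · -- Psi(k,q)
      obtain ⟨c, hc⟩ := hqodd
      have hqc : (q:ℤ) = 2*(c:ℤ)+1 := by exact_mod_cast hc
      have hq3 : 3 ≤ q := by have := hqp.two_le; omega
      set e2 : ℤ := (c:ℤ) + 1 with he2def
      have he2 : 2*e2 = (q:ℤ)+1 := by omega
      have hpsi := psi_eq_encode k q e2 he2
      constructor
      · rw [hpsi]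
        exact encode_csrs (good_cand1 (k:ℤ) e2 (q:ℤ) he2) ⟨_, enc1 (mem_coset_self _ _)⟩
          (encode_proper1 (by exact_mod_cast (by omega : 2 ≤ q)) rfl)
      · rintro Δ ⟨⟨hne', hsub', hprop', hrefl'⟩, hclosed'⟩ hsubΔ
        have hdec' := decompose hsub' hrefl'
        set S' := Sof Δ with hS'def
        set L' := Lof Δ with hL'def
        have hG' : GoodPair S' L' :=
          good_of (by rw [← hdec']; exact hrefl') (by rw [← hdec']; exact hclosed')
        have hproper' : encode S' L' ≠ PhiA22 := by rw [← hdec']; exact hprop'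
        have hsubS : coset (k:ℤ) (q:ℤ) ⊆ S' := by
          intro m hm
          exact dec1 (by rw [← hdec']; exact hsubΔ (by rw [hpsi]; exact enc1 hm))
        have hsubL : coset ((k:ℤ)+e2) (q:ℤ) ⊆ L' := by
          intro r hr
          exact dec3 (by rw [← hdec']; exact hsubΔ (by rw [hpsi]; exact enc3 hr))
        have hS' : S'.Nonempty := ⟨_, hsubS (mem_coset_self _ _)⟩
        have hL' : L'.Nonempty := ⟨_, hsubL (mem_coset_self _ _)⟩
        obtain ⟨a', d', e', hd1', he', hSeq', hLeq'⟩ := classify_both hG' hS' hL'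
        have hsubc : coset (k:ℤ) (q:ℤ) ⊆ coset a' d' := by rw [← hSeq']; exact hsubS
        obtain ⟨hdvd', hkmem⟩ := coset_subset_elim hsubc
        have hd1q : d' = 1 ∨ d' = (q:ℤ) := by
          have h1 : d'.natAbs ∣ q := by
            have h2 := Int.natAbs_dvd_natAbs.2 hdvd'
            simpa using h2
          rcases hqp.eq_one_or_self_of_dvd _ h1 with h | h <;> omega
        rcases hd1q with rfl | rfl
        · exfalso
          apply hproper'
          rw [hSeq', hLeq', coset_one, coset_one, ← phi_eq_encode_univ]
        · have he'e2 : e' = e2 := by omega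
          have hSfin : S' = coset (k:ℤ) (q:ℤ) := by
            rw [hSeq', ← coset_shift hkmem]
          have hLfin : L' = coset ((k:ℤ)+e2) (q:ℤ) := by
            rw [hLeq', he'e2, ← coset_shift (coset_add_const hkmem)]
          rw [hdec', hSfin, hLfin, hpsi]
    · -- cand 2a
      have hpsi := cand2a_eq
      constructor
      · rw [hpsi]
        exact encode_csrs (good_cand2 0) ⟨_, enc1 (mem_coset_self 0 2)⟩ (encode_proper_L rfl)
      · rintro Δ ⟨⟨hne', hsub', hprop', hrefl'⟩, hclosed'⟩ hsubΔ
        have hdec' := decompose hsub' hrefl'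
        set S' := Sof Δ with hS'def
        set L' := Lof Δ with hL'def
        have hG' : GoodPair S' L' :=
          good_of (by rw [← hdec']; exact hrefl') (by rw [← hdec']; exact hclosed')
        have hproper' : encode S' L' ≠ PhiA22 := by rw [← hdec']; exact hprop'
        have hsubS : coset 0 2 ⊆ S' := by
          intro m hm
          exact dec1 (by rw [← hdec']; exact hsubΔ (by rw [hpsi]; exact enc1 hm))
        have hS' : S'.Nonempty := ⟨_, hsubS (mem_coset_self _ _)⟩
        by_cases hL' : L'.Nonempty
        · exfalso
          obtain ⟨a', d', e', hd1', he', hSeq', hLeq'⟩ := classify_both hG' hS' hL'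
          have hsubc : coset 0 2 ⊆ coset a' d' := by rw [← hSeq']; exact hsubS
          obtain ⟨hdvd', hkmem⟩ := coset_subset_elim hsubc
          have hle : d' ≤ 2 := Int.le_of_dvd (by norm_num) hdvd'
          have : d' = 1 := by omega
          subst this
          apply hproper'
          rw [hSeq', hLeq', coset_one, coset_one, ← phi_eq_encode_univ]
        · have hLe : L' = ∅ := Set.not_nonempty_iff_eq_empty.1 hL'
          obtain ⟨a', d', hd0', hdvd2, hSeq'⟩ := classify_L_empty hG' hLe hS'
          have hsubc : coset 0 2 ⊆ coset a' d' := by rw [← hSeq']; exact hsubS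
          obtain ⟨hdvd', hkmem⟩ := coset_subset_elim hsubc
          have hd2 : d' = 2 := by
            have hne0 : d' ≠ 0 := by rintro rfl; exact absurd hdvd' (by norm_num)
            have hle : d' ≤ 2 := Int.le_of_dvd (by norm_num) hdvd'
            omega
          subst hd2
          have hSfin : S' = coset 0 2 := by rw [hSeq', ← coset_shift hkmem]
          rw [hdec', hSfin, hLe, hpsi]
    · -- cand 2b
      have hpsi := cand2b_eq
      constructor
      · rw [hpsi]
        exact encode_csrs (good_cand2 1) ⟨_, enc1 (mem_coset_self 1 2)⟩ (encode_proper_L rfl)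
      · rintro Δ ⟨⟨hne', hsub', hprop', hrefl'⟩, hclosed'⟩ hsubΔ
        have hdec' := decompose hsub' hrefl'
        set S' := Sof Δ with hS'def
        set L' := Lof Δ with hL'def
        have hG' : GoodPair S' L' :=
          good_of (by rw [← hdec']; exact hrefl') (by rw [← hdec']; exact hclosed')
        have hproper' : encode S' L' ≠ PhiA22 := by rw [← hdec']; exact hprop'
        have hsubS : coset 1 2 ⊆ S' := by
          intro m hm
          exact dec1 (by rw [← hdec']; exact hsubΔ (by rw [hpsi]; exact enc1 hm))
        have hS' : S'.Nonempty := ⟨_, hsubS (mem_coset_self _ _)⟩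
        by_cases hL' : L'.Nonempty
        · exfalso
          obtain ⟨a', d', e', hd1', he', hSeq', hLeq'⟩ := classify_both hG' hS' hL'
          have hsubc : coset 1 2 ⊆ coset a' d' := by rw [← hSeq']; exact hsubS
          obtain ⟨hdvd', hkmem⟩ := coset_subset_elim hsubc
          have hle : d' ≤ 2 := Int.le_of_dvd (by norm_num) hdvd'
          have : d' = 1 := by omega
          subst this
          apply hproper'
          rw [hSeq', hLeq', coset_one, coset_one, ← phi_eq_encode_univ]
        · have hLe : L' = ∅ := Set.not_nonempty_iff_eq_empty.1 hL'
          obtain ⟨a', d', hd0', hdvd2, hSeq'⟩ := classify_L_empty hG' hLe hS'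
          have hsubc : coset 1 2 ⊆ coset a' d' := by rw [← hSeq']; exact hsubS
          obtain ⟨hdvd', hkmem⟩ := coset_subset_elim hsubc
          have hd2 : d' = 2 := by
            have hne0 : d' ≠ 0 := by rintro rfl; exact absurd hdvd' (by norm_num)
            have hle : d' ≤ 2 := Int.le_of_dvd (by norm_num) hdvd'
            omega
          subst hd2
          have hSfin : S' = coset 1 2 := by rw [hSeq', ← coset_shift hkmem]
          rw [hdec', hSfin, hLe, hpsi]
    · -- cand 3
      have hpsi := cand3_eq_encode
      constructor
      · rw [hpsi]
        exact encode_csrs good_cand3 ⟨_, enc3 (mem_coset_self 0 1)⟩ (encode_proper_S rfl)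
      · rintro Δ ⟨⟨hne', hsub', hprop', hrefl'⟩, hclosed'⟩ hsubΔ
        have hdec' := decompose hsub' hrefl'
        set S' := Sof Δ with hS'def
        set L' := Lof Δ with hL'def
        have hG' : GoodPair S' L' :=
          good_of (by rw [← hdec']; exact hrefl') (by rw [← hdec']; exact hclosed')
        have hproper' : encode S' L' ≠ PhiA22 := by rw [← hdec']; exact hprop'
        have hsubL : coset 0 1 ⊆ L' := by
          intro r hr
          exact dec3 (by rw [← hdec']; exact hsubΔ (by rw [hpsi]; exact enc3 hr))
        have hL' : L'.Nonempty := ⟨_, hsubL (mem_coset_self _ _)⟩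
        by_cases hS' : S'.Nonempty
        · exfalso
          obtain ⟨a', d', e', hd1', he', hSeq', hLeq'⟩ := classify_both hG' hS' hL'
          have hsubc : coset 0 1 ⊆ coset (a'+e') d' := by rw [← hLeq']; exact hsubL
          obtain ⟨hdvd', hkmem⟩ := coset_subset_elim hsubc
          have hle : d' ≤ 1 := Int.le_of_dvd (by norm_num) hdvd'
          have : d' = 1 := by omega
          subst this
          apply hproper'
          rw [hSeq', hLeq', coset_one, coset_one, ← phi_eq_encode_univ]
        · have hSe : S' = ∅ := Set.not_nonempty_iff_eq_empty.1 hS'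
          have hLfin : L' = coset 0 1 := by
            refine Set.Subset.antisymm ?_ hsubL
            rw [coset_one]
            exact Set.subset_univ _
          rw [hdec', hSe, hLfin, hpsi]

end A22Aux
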